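/- arXiv:1604.02467 — 3 statements merged into one kernel-verified Lean document; each statement's English description precedes it below -/
import Mathlib

section
/- Let m be a positive integer, c : Fin m → ℝ a censoring vector, and define weights w_i = c_i - ∑_{j=1}^{i} c_j/(m-j+1) for i = 1,...,m. Then for any vector x : Fin m → ℝ, the log-rank statistic ∑_{j=1}^m c_j (x_j - (m₁ - ∑_{i=1}^{j-1} x_i)/(m-j+1)), where m₁ = ∑_{i=1}^m x_i, equals the weighted sum ∑_{j=1}^m w_j x_j. -/
/-- The log-rank statistic equals a weighted sum with weights
`w j = c j - ∑_{i=1}^{j} c i / (m - i + 1)` independent of `x`. -/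
theorem logrank_weighted_sum (m : ℕ) (hm : 0 < m) (c x : ℕ → ℝ) :
    ∑ j ∈ Finset.Icc 1 m,
      c j * (x j - ((∑ i ∈ Finset.Icc 1 m, x i) - ∑ i ∈ Finset.Icc 1 (j - 1), x i) /
        ((m : ℝ) - j + 1))
    = ∑ j ∈ Finset.Icc 1 m,
        (c j - ∑ i ∈ Finset.Icc 1 j, c i / ((m : ℝ) - i + 1)) * x j := by
  have key : ∀ j ∈ Finset.Icc 1 m,
      (∑ i ∈ Finset.Icc 1 m, x i) - ∑ i ∈ Finset.Icc 1 (j - 1), x i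
        = ∑ i ∈ Finset.Icc j m, x i := by
    intro j hj
    simp only [Finset.mem_Icc] at hj
    rw [sub_eq_iff_eq_add, ← Finset.sum_union]
    · congr 1
      ext k; simp only [Finset.mem_Icc, Finset.mem_union]; omega
    · rw [Finset.disjoint_left]; intro a ha hb
      simp only [Finset.mem_Icc] at ha hb; omega
  have step1 : ∑ j ∈ Finset.Icc 1 m,
      c j * (x j - ((∑ i ∈ Finset.Icc 1 m, x i) - ∑ i ∈ Finset.Icc 1 (j - 1), x i) /
        ((m : ℝ) - j + 1))
      = ∑ j ∈ Finset.Icc 1 m,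
          (c j * x j - ∑ i ∈ Finset.Icc j m, (c j / ((m : ℝ) - j + 1)) * x i) := by
    refine Finset.sum_congr rfl fun j hj => ?_
    rw [key j hj, ← Finset.mul_sum]
    ring
  rw [step1, Finset.sum_sub_distrib]
  have swap : ∑ j ∈ Finset.Icc 1 m, ∑ i ∈ Finset.Icc j m, (c j / ((m : ℝ) - j + 1)) * x i
      = ∑ i ∈ Finset.Icc 1 m, ∑ j ∈ Finset.Icc 1 i, (c j / ((m : ℝ) - j + 1)) * x i := by
    exact Finset.sum_comm' fun j i => by simp only [Finset.mem_Icc]; omega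
  rw [swap]
  rw [eq_comm]
  have : ∀ j ∈ Finset.Icc 1 m,
      (c j - ∑ i ∈ Finset.Icc 1 j, c i / ((m : ℝ) - i + 1)) * x j
      = c j * x j - (∑ i ∈ Finset.Icc 1 j, (c i / ((m : ℝ) - i + 1)) * x j) := by
    intro j hj
    rw [sub_mul, Finset.sum_mul]
  rw [Finset.sum_congr rfl this, Finset.sum_sub_distrib]
end

section
/- Let m be a positive integer divisible by 4 and sufficiently large, with c_j = 1 for j ≤ m/4 and c_j = 0 for j > m/4. Define w_i = c_i - ∑_{j=1}^{i} c_j/(m-j+1). Then w_{m/4} = 1 - H(m) + H(3m/4) > 0, where H(n) is the n-th harmonic number. Consequently w_i > 0 for all 1 ≤ i ≤ m/4. -/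
/-- For `m` divisible by 4 and sufficiently large, with `c j = 1` iff `j ≤ m/4`,
the weight `w (m/4)` equals `1 - H(m) + H(3m/4)` and is positive; consequently
`w i > 0` for all `1 ≤ i ≤ m/4`. -/
theorem weight_quarter_positive :
    ∃ M : ℕ, ∀ m : ℕ, M ≤ m → 4 ∣ m →
      ∀ c w H : ℕ → ℝ,
        (∀ j, c j = if j ≤ m / 4 then 1 else 0) →
        (∀ i, w i = c i - ∑ j ∈ Finset.Icc 1 i, c j / ((m : ℝ) - j + 1)) →
        (∀ n, H n = ∑ k ∈ Finset.Icc 1 n, (1 : ℝ) / k) →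
        w (m / 4) = 1 - H m + H (3 * m / 4) ∧
        0 < w (m / 4) ∧
        (∀ i, 1 ≤ i → i ≤ m / 4 → 0 < w i) := by
  refine ⟨4, ?_⟩
  intro m hm h4 c w H hc hw hH
  obtain ⟨k, rfl⟩ := h4
  have hk1 : 1 ≤ k := by omega
  have hq : 4 * k / 4 = k := by omega
  have h3 : 3 * (4 * k) / 4 = 3 * k := by omega
  rw [hq, h3]
  -- formula for w i when i ≤ k
  have hS : ∀ i, i ≤ k →
      w i = 1 - ∑ j ∈ Finset.Icc 1 i, (1 : ℝ) / (((4 * k : ℕ) : ℝ) - j + 1) := by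
    intro i hi
    rw [hw, hc, if_pos (by omega : i ≤ 4 * k / 4)]
    congr 1
    refine Finset.sum_congr rfl fun j hj => ?_
    rw [Finset.mem_Icc] at hj
    rw [hc, if_pos (by omega : j ≤ 4 * k / 4)]
  -- reindex the sum
  have hre : ∀ i, i ≤ k →
      ∑ j ∈ Finset.Icc 1 i, (1 : ℝ) / (((4 * k : ℕ) : ℝ) - j + 1)
        = ∑ x ∈ Finset.Ioc (4 * k - i) (4 * k), (1 : ℝ) / (x : ℝ) := by
    intro i hi
    refine Finset.sum_nbij' (fun j => 4 * k + 1 - j) (fun x => 4 * k + 1 - x) ?_ ?_ ?_ ?_ ?_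
    · intro a ha; rw [Finset.mem_Icc] at ha; rw [Finset.mem_Ioc]; omega
    · intro b hb; rw [Finset.mem_Ioc] at hb; rw [Finset.mem_Icc]; omega
    · intro a ha; rw [Finset.mem_Icc] at ha; omega
    · intro b hb; rw [Finset.mem_Ioc] at hb; omega
    · intro a ha; rw [Finset.mem_Icc] at ha
      have hcast : ((4 * k + 1 - a : ℕ) : ℝ) = ((4 * k : ℕ) : ℝ) - a + 1 := by
        rw [Nat.cast_sub (by omega : a ≤ 4 * k + 1)]
        push_cast
        ring
      rw [hcast]
  have hIcc : ∀ n : ℕ, Finset.Icc 1 n = Finset.Ioc 0 n := fun n => Finset.Icc_add_one_left_eq_Ioc 0 n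
  have hH4 : H (4 * k) - H (3 * k) = ∑ x ∈ Finset.Ioc (3 * k) (4 * k), (1 : ℝ) / x := by
    rw [hH, hH, hIcc, hIcc,
      ← Finset.sum_Ioc_consecutive _ (by omega : 0 ≤ 3 * k) (by omega : 3 * k ≤ 4 * k)]
    ring
  -- bound the tail sum
  have hT : ∑ x ∈ Finset.Ioc (3 * k) (4 * k), (1 : ℝ) / x < 1 := by
    have hb : ∀ x ∈ Finset.Ioc (3 * k) (4 * k), (1 : ℝ) / x ≤ 1 / ((3 * k + 1 : ℕ) : ℝ) := by
      intro x hx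
      rw [Finset.mem_Ioc] at hx
      apply one_div_le_one_div_of_le
      · exact_mod_cast Nat.succ_pos (3 * k)
      · exact_mod_cast (by omega : 3 * k + 1 ≤ x)
    calc ∑ x ∈ Finset.Ioc (3 * k) (4 * k), (1 : ℝ) / x
        ≤ (Finset.Ioc (3 * k) (4 * k)).card • (1 / ((3 * k + 1 : ℕ) : ℝ)) :=
          Finset.sum_le_card_nsmul _ _ _ hb
      _ < 1 := by
          rw [Nat.card_Ioc, (by omega : 4 * k - 3 * k = k), nsmul_eq_mul, mul_one_div,
            div_lt_one (by exact_mod_cast Nat.succ_pos (3 * k))]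
          exact_mod_cast (by omega : k < 3 * k + 1)
  have hSk : ∑ j ∈ Finset.Icc 1 k, (1 : ℝ) / (((4 * k : ℕ) : ℝ) - j + 1) < 1 := by
    rw [hre k le_rfl, (by omega : 4 * k - k = 3 * k)]
    exact hT
  have hwk : w k = 1 - H (4 * k) + H (3 * k) := by
    rw [hS k le_rfl, hre k le_rfl, (by omega : 4 * k - k = 3 * k)]
    linarith [hH4]
  refine ⟨hwk, ?_, ?_⟩
  · rw [hS k le_rfl]; linarith [hSk]
  · intro i h1 hik
    rw [hS i hik]
    have hsub : ∑ j ∈ Finset.Icc 1 i, (1 : ℝ) / (((4 * k : ℕ) : ℝ) - j + 1)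
        ≤ ∑ j ∈ Finset.Icc 1 k, (1 : ℝ) / (((4 * k : ℕ) : ℝ) - j + 1) := by
      apply Finset.sum_le_sum_of_subset_of_nonneg (Finset.Icc_subset_Icc_right hik)
      intro j hj _
      rw [Finset.mem_Icc] at hj
      have hjk : (j : ℝ) ≤ 4 * k := by exact_mod_cast (by omega : j ≤ 4 * k)
      have : (0 : ℝ) < ((4 * k : ℕ) : ℝ) - j + 1 := by push_cast; linarith
      positivity
    linarith
end

section
/- With the setup of the NP-hardness reduction (m divisible by 4, c_j = 1 iff j ≤ m/4, weights w_i = c_i − ∑_{j=1}^i c_j/(m−j+1)), for all 1 ≤ j ≤ m/4 − 1: (∑_{i=1}^{j} w_i)/√(j(m−j)) ≤ (∑_{i=1}^{j+1} w_i)/√((j+1)(m−(j+1))). That is, the normalized prefix score is nondecreasing in the prefix length up to m/4. -/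
/-- In the NP-hardness reduction setup, the normalized prefix score
`(∑_{i=1}^{j} w i)/√(j(m-j))` is nondecreasing in `j` for `1 ≤ j ≤ m/4 - 1`. -/
theorem normalized_prefix_score_monotone (m : ℕ) (hm : 0 < m) (h4 : 4 ∣ m)
    (c w : ℕ → ℝ)
    (hc : ∀ j, c j = if j ≤ m / 4 then 1 else 0)
    (hw : ∀ i, w i = c i - ∑ j ∈ Finset.Icc 1 i, c j / ((m : ℝ) - j + 1))
    (hpos : ∀ i, 1 ≤ i → i ≤ m / 4 → 0 < w i)
    (hdec : ∀ i j, 1 ≤ i → i < j → j ≤ m / 4 → w j < w i) :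
    ∀ j, 1 ≤ j → j ≤ m / 4 - 1 →
      (∑ i ∈ Finset.Icc 1 j, w i) / Real.sqrt ((j : ℝ) * ((m : ℝ) - j)) ≤
      (∑ i ∈ Finset.Icc 1 (j + 1), w i) /
        Real.sqrt (((j : ℝ) + 1) * ((m : ℝ) - ((j : ℝ) + 1))) := by
  intro j hj1 hj2
  obtain ⟨q, hq⟩ := h4
  have hj3 : j + 1 ≤ m / 4 := by omega
  have hjm : 4 * (j + 1) ≤ m := by omega
  set J : ℝ := (j : ℝ) with hJdef
  have hJ1 : (1:ℝ) ≤ J := by rw [hJdef]; exact_mod_cast hj1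
  have hmr : (4:ℝ) * (J + 1) ≤ (m:ℝ) := by rw [hJdef]; exact_mod_cast hjm
  have hJ0 : (0:ℝ) < J := by linarith
  have hmJ : (0:ℝ) < (m:ℝ) - J := by linarith
  have hmJ2 : (0:ℝ) < (m:ℝ) - 2*J - 1 := by linarith
  have hck : ∀ k, k ≤ m / 4 → c k = 1 := by
    intro k hk; rw [hc]; simp [hk]
  have hck0 : ∀ k, 0 ≤ c k := by
    intro k; rw [hc]; split <;> norm_num
  -- positivity of square roots
  have hprodA : (0:ℝ) < J * ((m:ℝ) - J) := mul_pos hJ0 hmJ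
  have hprodB : (0:ℝ) < (J + 1) * ((m:ℝ) - (J + 1)) := by nlinarith
  set a : ℝ := Real.sqrt (J * ((m:ℝ) - J)) with hadef
  set b : ℝ := Real.sqrt ((J + 1) * ((m:ℝ) - (J + 1))) with hbdef
  have ha : 0 < a := Real.sqrt_pos.2 hprodA
  have hb : 0 < b := Real.sqrt_pos.2 hprodB
  have ha2 : a * a = J * ((m:ℝ) - J) := Real.mul_self_sqrt hprodA.le
  have hb2 : b * b = (J + 1) * ((m:ℝ) - (J + 1)) := Real.mul_self_sqrt hprodB.le
  have hab : a ≤ b := Real.sqrt_le_sqrt (by nlinarith)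
  -- sum bound : S ≤ J
  set S : ℝ := ∑ i ∈ Finset.Icc 1 j, w i with hSdef
  have hSle : S ≤ J := by
    have h1 : ∀ i ∈ Finset.Icc 1 j, w i ≤ 1 := by
      intro i hi
      simp only [Finset.mem_Icc] at hi
      rw [hw, hck i (by omega)]
      have h2 : 0 ≤ ∑ k ∈ Finset.Icc 1 i, c k / ((m:ℝ) - k + 1) := by
        apply Finset.sum_nonneg
        intro k hk
        simp only [Finset.mem_Icc] at hk
        apply div_nonneg (hck0 k)
        have hkm : (k:ℝ) ≤ (m:ℝ) := by exact_mod_cast (by omega : k ≤ m)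
        linarith
      linarith
    calc S ≤ ∑ i ∈ Finset.Icc 1 j, (1:ℝ) := Finset.sum_le_sum h1
      _ = J := by simp [hJdef]
  -- lower bound on w (j+1)
  have hw0 : 0 < w (j + 1) := hpos (j + 1) (by omega) hj3
  have hwlb : (m:ℝ) - 2*J - 1 ≤ w (j + 1) * ((m:ℝ) - J) := by
    have hsum : ∑ k ∈ Finset.Icc 1 (j+1), c k / ((m:ℝ) - k + 1)
        ≤ (J + 1) * (1 / ((m:ℝ) - J)) := by
      have h1 : ∀ k ∈ Finset.Icc 1 (j+1), c k / ((m:ℝ) - k + 1) ≤ 1 / ((m:ℝ) - J) := by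
        intro k hk
        simp only [Finset.mem_Icc] at hk
        rw [hck k (by omega)]
        apply one_div_le_one_div_of_le hmJ
        have : (k:ℝ) ≤ J + 1 := by rw [hJdef]; exact_mod_cast hk.2
        linarith
      calc ∑ k ∈ Finset.Icc 1 (j+1), c k / ((m:ℝ) - k + 1)
          ≤ ∑ k ∈ Finset.Icc 1 (j+1), 1 / ((m:ℝ) - J) := Finset.sum_le_sum h1
        _ = (J + 1) * (1 / ((m:ℝ) - J)) := by
            rw [Finset.sum_const, Nat.card_Icc]
            push_cast
            ring
    have hwv : w (j+1) = 1 - ∑ k ∈ Finset.Icc 1 (j+1), c k / ((m:ℝ) - k + 1) := by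
      rw [hw, hck (j+1) hj3]
    have h2 : (J + 1) * (1 / ((m:ℝ) - J)) * ((m:ℝ) - J) = J + 1 := by
      field_simp
    nlinarith [mul_le_mul_of_nonneg_right hsum hmJ.le]
  -- main inequality
  rw [div_le_div_iff₀ (Real.sqrt_pos.2 hprodA) (Real.sqrt_pos.2 hprodB)]
  rw [Finset.sum_Icc_succ_top (by omega : 1 ≤ j + 1)]
  show S * b ≤ (S + w (j+1)) * a
  set W : ℝ := w (j+1) with hWdef
  have e1 : b * b - a * a = (m:ℝ) - 2*J - 1 := by rw [ha2, hb2]; ring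
  have hba : 0 ≤ b - a := sub_nonneg.2 hab
  have step1 : S * (b - a) ≤ J * (b - a) := mul_le_mul_of_nonneg_right hSle hba
  have goal2 : J * (b - a) ≤ W * a := by
    have hab2 : 0 < a + b := by linarith
    rw [← mul_le_mul_iff_of_pos_right hab2]
    calc J * (b - a) * (a + b) = J * (b * b - a * a) := by ring
      _ = J * ((m:ℝ) - 2*J - 1) := by rw [e1]
      _ ≤ 2 * (J * (W * ((m:ℝ) - J))) := by nlinarith [mul_le_mul_of_nonneg_left hwlb hJ0.le]
      _ = 2 * W * (J * ((m:ℝ) - J)) := by ring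
      _ = 2 * W * (a * a) := by rw [ha2]
      _ = W * a * (2 * a) := by ring
      _ ≤ W * a * (a + b) := by
          apply mul_le_mul_of_nonneg_left (by linarith) (mul_nonneg hw0.le ha.le)
  linarith [step1, goal2]
end
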